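/- Let ((X_k, Q_k))_{k≥1} be i.i.d. pairs of real random variables with Q_1 ≥ 0 almost surely, E[X_1] > 0, E[e^{θ |X_1|}] < ∞ for some θ > 0, and E[e^{δ Q_1}] < ∞ for some δ > 0. For x ≥ 0, set S_0 := x and S_n := x + X_1 + ⋯ + X_n for n ≥ 1. Then there exists ε > 0 such that sup_{x ≥ 0} E[exp(ε ∑_{k=0}^∞ e^{−S_k} 1{S_k ≥ 0} Q_{k+1})] ≤ 2. -/

import Mathlib

open MeasureTheory Filter Real
open scoped ENNReal

attribute [local instance] Classical.propDecidable

noncomputable section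

/-- `exp` on `[0,∞]`, with `exp ∞ = ∞`. -/
def expE (r : ℝ≥0∞) : ℝ≥0∞ := if r = ⊤ then ⊤ else ENNReal.ofReal (exp r.toReal)

end

private lemma exp_quad (s : ℝ) : exp s ≤ 1 + s + s ^ 2 * exp |s| := by
  rcases le_or_gt 0 s with hs | hs
  · rw [abs_of_nonneg hs]
    rcases le_or_gt 1 s with h1 | h1
    · have hs2 : 1 ≤ s ^ 2 := by nlinarith
      have h4 := mul_le_mul_of_nonneg_right hs2 (exp_pos s).le
      nlinarith [exp_pos s]
    · -- exp s * (1 - s) ≤ 1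
      have h2 : (1 : ℝ) - s ≤ exp (-s) := by linarith [add_one_le_exp (-s)]
      have h3 : exp s * (1 - s) ≤ 1 := by
        have := mul_le_mul_of_nonneg_left h2 (le_of_lt (exp_pos s))
        rwa [← Real.exp_add, add_neg_cancel, Real.exp_zero] at this
      nlinarith [exp_pos s]
  · rw [abs_of_neg hs]
    have h2 : (1 : ℝ) - s ≤ exp (-s) := by linarith [add_one_le_exp (-s)]
    have h3 : exp s * (1 - s) ≤ 1 := by
      have := mul_le_mul_of_nonneg_left h2 (le_of_lt (exp_pos s))
      rwa [← Real.exp_add, add_neg_cancel, Real.exp_zero] at this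
    have h4 : exp s ≤ 1 + s + s ^ 2 := by nlinarith [exp_pos s]
    nlinarith [one_le_exp (neg_nonneg.mpr hs.le), sq_nonneg s]

private lemma sq_exp_bound {θ t : ℝ} (hθ : 0 < θ) (ht : 0 ≤ t) :
    t ^ 2 * exp (θ / 2 * t) ≤ 16 / θ ^ 2 * exp (θ * t) := by
  have h1 : θ * t / 4 ≤ exp (θ * t / 4) := by linarith [add_one_le_exp (θ * t / 4), exp_pos (θ*t/4)]
  have h2 : exp (θ * t) = exp (θ * t / 4) ^ 4 := by
    rw [← Real.exp_nat_mul]; congr 1; push_cast; ring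
  have h3 : exp (θ / 2 * t) = exp (θ * t / 4) ^ 2 := by
    rw [← Real.exp_nat_mul]; congr 1; push_cast; ring
  have hu : 0 < exp (θ * t / 4) := exp_pos _
  have ht2 : t ^ 2 ≤ 16 / θ ^ 2 * exp (θ * t / 4) ^ 2 := by
    have : (θ * t / 4) ^ 2 ≤ exp (θ * t / 4) ^ 2 := by
      apply sq_le_sq' <;> nlinarith [mul_nonneg hθ.le ht]
    rw [div_mul_eq_mul_div, le_div_iff₀ (by positivity)]
    calc t ^ 2 * θ ^ 2 = 16 * (θ * t / 4) ^ 2 := by ring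
    _ ≤ 16 * exp (θ * t / 4) ^ 2 := by linarith
  rw [h2, h3]
  calc t ^ 2 * exp (θ * t / 4) ^ 2 ≤ (16 / θ ^ 2 * exp (θ * t / 4) ^ 2) * exp (θ * t / 4) ^ 2 := by
        apply mul_le_mul_of_nonneg_right ht2 (by positivity)
  _ = 16 / θ ^ 2 * exp (θ * t / 4) ^ 4 := by ring

private lemma chernoff {Ω : Type*} [MeasurableSpace Ω] (P : Measure Ω) {g : Ω → ℝ}
    (hg : AEMeasurable g P) (d c : ℝ) (hd : 0 ≤ d) :
    P {ω | c ≤ g ω} ≤ ENNReal.ofReal (exp (-(d * c))) * ∫⁻ ω, ENNReal.ofReal (exp (d * g ω)) ∂P := by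
  set A : ℝ≥0∞ := ENNReal.ofReal (exp (d * c)) with hA
  have hA0 : A ≠ 0 := by simp [hA, exp_pos]
  have hAt : A ≠ ⊤ := by simp [hA]
  have hsub : {ω | c ≤ g ω} ⊆ {ω | A ≤ ENNReal.ofReal (exp (d * g ω))} := by
    intro ω hω
    exact ENNReal.ofReal_le_ofReal (exp_le_exp.mpr (mul_le_mul_of_nonneg_left hω hd))
  have hmark := mul_meas_ge_le_lintegral₀
    (μ := P) (f := fun ω => ENNReal.ofReal (exp (d * g ω)))
    (by exact (measurable_exp.comp (measurable_const_mul d)).ennreal_ofReal.comp_aemeasurable hg) A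
  have h1 : A * P {ω | c ≤ g ω} ≤ ∫⁻ ω, ENNReal.ofReal (exp (d * g ω)) ∂P :=
    le_trans (mul_le_mul_right (measure_mono hsub) A) hmark
  have h2 : P {ω | c ≤ g ω} ≤ A⁻¹ * ∫⁻ ω, ENNReal.ofReal (exp (d * g ω)) ∂P := by
    rw [← one_mul (P _), ← ENNReal.inv_mul_cancel hA0 hAt, mul_assoc]
    exact mul_le_mul_right h1 A⁻¹
  have h3 : A⁻¹ = ENNReal.ofReal (exp (-(d * c))) := by
    rw [hA, ← ENNReal.ofReal_inv_of_pos (exp_pos _), ← Real.exp_neg]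
  rwa [h3] at h2

private lemma iIndep_lintegral_prod {Ω : Type*} [MeasurableSpace Ω] (P : Measure Ω)
    [IsProbabilityMeasure P] (V : ℕ → Ω → ℝ)
    (hi : ProbabilityTheory.iIndepFun V P)
    (hm : ∀ k, Measurable (V k)) (f : ℕ → ℝ → ℝ≥0∞) (hf : ∀ k, Measurable (f k)) :
    ∀ n, ∫⁻ ω, ∏ k ∈ Finset.range n, f k (V k ω) ∂P
      = ∏ k ∈ Finset.range n, ∫⁻ ω, f k (V k ω) ∂P := by
  intro n
  induction n with
  | zero => simp
  | succ n ih =>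
    have hdisj : Disjoint (Finset.range n) ({n} : Finset ℕ) := by simp
    have hIF := hi.indepFun_finset (Finset.range n) {n} hdisj hm
    have hcomp := hIF.comp
      (φ := fun (v : (i : (Finset.range n : Finset ℕ)) → ℝ) =>
        ∏ i ∈ (Finset.range n).attach, f i (v i))
      (ψ := fun (v : (i : ({n} : Finset ℕ)) → ℝ) => f n (v ⟨n, Finset.mem_singleton_self n⟩))
      (Finset.measurable_prod _ (fun i _ => (hf i).comp (measurable_pi_apply i)))
      ((hf n).comp (measurable_pi_apply _))
    have heq1 : (fun ω => ∏ k ∈ Finset.range n, f k (V k ω))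
        = (fun (v : (i : (Finset.range n : Finset ℕ)) → ℝ) =>
            ∏ i ∈ (Finset.range n).attach, f i (v i)) ∘ (fun a (i : (Finset.range n : Finset ℕ)) => V i a) := by
      funext ω
      simp only [Function.comp_apply]
      rw [← Finset.prod_attach]
    have heq2 : (fun ω => f n (V n ω))
        = (fun (v : (i : ({n} : Finset ℕ)) → ℝ) => f n (v ⟨n, Finset.mem_singleton_self n⟩)) ∘
          (fun a (i : ({n} : Finset ℕ)) => V i a) := rfl
    have hindep2 : ProbabilityTheory.IndepFun (fun ω => ∏ k ∈ Finset.range n, f k (V k ω))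
        (fun ω => f n (V n ω)) P := by
      rw [heq1, heq2]; exact hcomp
    have hsplit : ∫⁻ ω, ∏ k ∈ Finset.range (n + 1), f k (V k ω) ∂P
        = ∫⁻ ω, (∏ k ∈ Finset.range n, f k (V k ω)) * f n (V n ω) ∂P := by
      apply lintegral_congr; intro ω; rw [Finset.prod_range_succ]
    have hmul := ProbabilityTheory.lintegral_mul_eq_lintegral_mul_lintegral_of_indepFun''
        (f := fun ω => ∏ k ∈ Finset.range n, f k (V k ω)) (g := fun ω => f n (V n ω))
        (Finset.measurable_prod _ (fun i _ => (hf i).comp (hm i))).aemeasurable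
        ((hf n).comp (hm n)).aemeasurable hindep2
    rw [hsplit, hmul, ih, Finset.prod_range_succ]

private lemma tsum_ofReal_geom {a r : ℝ} (ha : 0 ≤ a) (hr0 : 0 ≤ r) (hr : r < 1) :
    ∑' k : ℕ, ENNReal.ofReal (a * r ^ k) = ENNReal.ofReal (a / (1 - r)) := by
  have h1 : ∀ k : ℕ, ENNReal.ofReal (a * r ^ k) = ENNReal.ofReal a * (ENNReal.ofReal r) ^ k := by
    intro k; rw [ENNReal.ofReal_mul ha, ENNReal.ofReal_pow hr0]
  simp_rw [h1]
  rw [ENNReal.tsum_mul_left, ENNReal.tsum_geometric]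
  have h2 : (1 : ℝ≥0∞) - ENNReal.ofReal r = ENNReal.ofReal (1 - r) := by
    rw [ENNReal.ofReal_sub 1 hr0, ENNReal.ofReal_one]
  rw [h2, ← ENNReal.ofReal_inv_of_pos (by linarith), ← ENNReal.ofReal_mul ha, div_eq_mul_inv]

set_option maxHeartbeats 2000000 in
theorem positive_drift_perpetuity_exponential_moment
    {Ω : Type*} [MeasurableSpace Ω] (P : Measure Ω) [IsProbabilityMeasure P]
    (X Q : ℕ → Ω → ℝ)
    (hmeas : ∀ k, Measurable fun ω => (X k ω, Q k ω))
    (hindep : ProbabilityTheory.iIndepFun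
      (fun k ω => (X k ω, Q k ω)) P)
    (hident : ∀ k, Measure.map (fun ω => (X k ω, Q k ω)) P
      = Measure.map (fun ω => (X 0 ω, Q 0 ω)) P)
    (hQnonneg : ∀ k, ∀ᵐ ω ∂P, 0 ≤ Q k ω)
    (hXint : Integrable (X 0) P) (hXdrift : 0 < ∫ ω, X 0 ω ∂P)
    (hXexp : ∃ θ > (0 : ℝ), ∫⁻ ω, ENNReal.ofReal (exp (θ * |X 0 ω|)) ∂P < ⊤)
    (hQexp : ∃ δ > (0 : ℝ), ∫⁻ ω, ENNReal.ofReal (exp (δ * Q 0 ω)) ∂P < ⊤) :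
    ∃ ε > (0 : ℝ), ∀ x ≥ (0 : ℝ),
      ∫⁻ ω, expE (ENNReal.ofReal ε *
          ∑' k : ℕ,
            (if 0 ≤ x + ∑ i ∈ Finset.range k, X i ω then
              ENNReal.ofReal (exp (-(x + ∑ i ∈ Finset.range k, X i ω)) * Q k ω) else 0))
        ∂P ≤ 2 := by
  classical
  obtain ⟨θ, hθ, hθfin⟩ := hXexp
  obtain ⟨δ, hδ, hδfin⟩ := hQexp
  have hXm : ∀ k, Measurable (X k) := fun k => measurable_fst.comp (hmeas k)
  have hQm : ∀ k, Measurable (Q k) := fun k => measurable_snd.comp (hmeas k)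
  have hXi : ProbabilityTheory.iIndepFun X P :=
    hindep.comp (fun _ => (Prod.fst : ℝ × ℝ → ℝ)) fun _ => measurable_fst
  have hQi : ProbabilityTheory.iIndepFun Q P :=
    hindep.comp (fun _ => (Prod.snd : ℝ × ℝ → ℝ)) fun _ => measurable_snd
  have hlintX : ∀ (f : ℝ → ℝ≥0∞), Measurable f → ∀ k,
      ∫⁻ ω, f (X k ω) ∂P = ∫⁻ ω, f (X 0 ω) ∂P := by
    intro f hf k
    have h1 : Measure.map (X k) P = Measure.map (X 0) P := by
      have e1 : Measure.map (X k) P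
          = Measure.map Prod.fst (Measure.map (fun ω => (X k ω, Q k ω)) P) := by
        rw [Measure.map_map measurable_fst (hmeas k)]; rfl
      have e2 : Measure.map (X 0) P
          = Measure.map Prod.fst (Measure.map (fun ω => (X 0 ω, Q 0 ω)) P) := by
        rw [Measure.map_map measurable_fst (hmeas 0)]; rfl
      rw [e1, e2, hident k]
    rw [← lintegral_map hf (hXm k), ← lintegral_map hf (hXm 0), h1]
  have hlintQ : ∀ (f : ℝ → ℝ≥0∞), Measurable f → ∀ k,
      ∫⁻ ω, f (Q k ω) ∂P = ∫⁻ ω, f (Q 0 ω) ∂P := by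
    intro f hf k
    have h1 : Measure.map (Q k) P = Measure.map (Q 0) P := by
      have e1 : Measure.map (Q k) P
          = Measure.map Prod.snd (Measure.map (fun ω => (X k ω, Q k ω)) P) := by
        rw [Measure.map_map measurable_snd (hmeas k)]; rfl
      have e2 : Measure.map (Q 0) P
          = Measure.map Prod.snd (Measure.map (fun ω => (X 0 ω, Q 0 ω)) P) := by
        rw [Measure.map_map measurable_snd (hmeas 0)]; rfl
      rw [e1, e2, hident k]
    rw [← lintegral_map hf (hQm k), ← lintegral_map hf (hQm 0), h1]
  have hIexpX : Integrable (fun ω => exp (θ * |X 0 ω|)) P := by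
    refine ⟨(measurable_exp.comp ((hXm 0).abs.const_mul θ)).aestronglyMeasurable, ?_⟩
    rw [hasFiniteIntegral_iff_ofReal (ae_of_all _ fun ω => (exp_pos _).le)]
    exact hθfin
  have hdom : ∀ (h : Ω → ℝ) (c : ℝ), Measurable h →
      (∀ ω, |h ω| ≤ c * exp (θ * |X 0 ω|)) → Integrable h P := by
    intro h c hh hb
    exact (hIexpX.const_mul c).mono' hh.aestronglyMeasurable
      (ae_of_all _ fun ω => by rw [Real.norm_eq_abs]; exact hb ω)
  set m := ∫ ω, X 0 ω ∂P with hmdef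
  have hm0 : 0 < m := hXdrift
  have hCCmeas : Measurable fun ω => (X 0 ω) ^ 2 * exp (θ / 2 * |X 0 ω|) :=
    ((hXm 0).pow_const 2).mul (measurable_exp.comp ((hXm 0).abs.const_mul (θ / 2)))
  have hCCint : Integrable (fun ω => (X 0 ω) ^ 2 * exp (θ / 2 * |X 0 ω|)) P := by
    apply hdom _ (16 / θ ^ 2) hCCmeas
    intro ω
    show |(X 0 ω) ^ 2 * exp (θ / 2 * |X 0 ω|)| ≤ 16 / θ ^ 2 * exp (θ * |X 0 ω|)
    rw [abs_of_nonneg (by positivity)]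
    have h := sq_exp_bound hθ (abs_nonneg (X 0 ω))
    rwa [sq_abs] at h
  set CC := ∫ ω, (X 0 ω) ^ 2 * exp (θ / 2 * |X 0 ω|) ∂P with hCCdef
  have hCC0 : 0 ≤ CC := integral_nonneg fun ω => by positivity
  set α := min (θ / 2) (m / (2 * CC + 1)) with hαdef
  have hα0 : 0 < α := lt_min (by linarith) (by positivity)
  have hαθ : α ≤ θ / 2 := min_le_left _ _
  have hexpInt : Integrable (fun ω => exp (-(α * X 0 ω))) P := by
    apply hdom _ 1 (measurable_exp.comp ((hXm 0).const_mul α).neg)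
    intro ω
    show |exp (-(α * X 0 ω))| ≤ 1 * exp (θ * |X 0 ω|)
    rw [abs_of_nonneg (exp_pos _).le, one_mul]
    apply exp_le_exp.mpr
    calc -(α * X 0 ω) ≤ |α * X 0 ω| := neg_le_abs _
    _ = α * |X 0 ω| := by rw [abs_mul, abs_of_pos hα0]
    _ ≤ θ * |X 0 ω| := mul_le_mul_of_nonneg_right (by linarith) (abs_nonneg _)
  set ρ := ∫ ω, exp (-(α * X 0 ω)) ∂P with hρdef
  have hρ0 : 0 ≤ ρ := integral_nonneg fun ω => (exp_pos _).le
  have hρub : ρ ≤ 1 - α * m / 2 := by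
    have hpt : ∀ ω, exp (-(α * X 0 ω)) ≤
        1 - α * X 0 ω + α ^ 2 * ((X 0 ω) ^ 2 * exp (θ / 2 * |X 0 ω|)) := by
      intro ω
      have h1 := exp_quad (-(α * X 0 ω))
      have h2 : |(-(α * X 0 ω))| = α * |X 0 ω| := by
        rw [abs_neg, abs_mul, abs_of_pos hα0]
      have h3 : exp (α * |X 0 ω|) ≤ exp (θ / 2 * |X 0 ω|) :=
        exp_le_exp.mpr (mul_le_mul_of_nonneg_right hαθ (abs_nonneg _))
      rw [h2] at h1
      have h5 := mul_le_mul_of_nonneg_left h3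
        (by positivity : (0:ℝ) ≤ α ^ 2 * (X 0 ω) ^ 2)
      linarith [h1, h5]
    have hf1 : Integrable (fun ω => 1 - α * X 0 ω) P :=
      (integrable_const 1).sub (hXint.const_mul α)
    have hint1 : Integrable
        (fun ω => 1 - α * X 0 ω + α ^ 2 * ((X 0 ω) ^ 2 * exp (θ / 2 * |X 0 ω|))) P :=
      hf1.add (hCCint.const_mul (α ^ 2))
    have h6 := integral_mono hexpInt hint1 hpt
    rw [integral_add hf1 (hCCint.const_mul (α ^ 2)),
      integral_sub (integrable_const 1) (hXint.const_mul α), integral_const] at h6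
    simp only [integral_const_mul, measure_univ, ENNReal.toReal_one, smul_eq_mul,
      one_mul, probReal_univ] at h6
    have h7 : α * CC ≤ m / 2 := by
      have h8 : α ≤ m / (2 * CC + 1) := min_le_right _ _
      have h9 : α * CC ≤ m / (2 * CC + 1) * CC := mul_le_mul_of_nonneg_right h8 hCC0
      have h10 : m / (2 * CC + 1) * CC ≤ m / 2 := by
        rw [div_mul_eq_mul_div, div_le_div_iff₀ (by positivity) (by norm_num)]
        linarith [hm0.le]
      linarith
    have h11 := mul_le_mul_of_nonneg_left h7 hα0.le
    rw [← hρdef, ← hmdef, ← hCCdef] at h6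
    linarith [h6, h11]
  set β := m / 4 with hβdef
  have hβ0 : 0 < β := by positivity
  set rr := exp (-(α * m / 4)) with hrrdef
  have hrr0 : 0 ≤ rr := (exp_pos _).le
  have hrr1 : rr < 1 := exp_lt_one_iff.mpr (by linarith [mul_pos hα0 hm0])
  have hρE : ∫⁻ ω, ENNReal.ofReal (exp (-(α * X 0 ω))) ∂P = ENNReal.ofReal ρ :=
    (ofReal_integral_eq_lintegral_ofReal hexpInt (ae_of_all _ fun ω => (exp_pos _).le)).symm
  clear_value m CC α ρ β rr
  have hW : ∀ k : ℕ, P {ω | (∑ i ∈ Finset.range k, X i ω) ≤ β * k}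
      ≤ ENNReal.ofReal (rr ^ k) := by
    intro k
    have hg : AEMeasurable (fun ω => -(∑ i ∈ Finset.range k, X i ω)) P :=
      ((Finset.measurable_sum _ fun i _ => hXm i).neg).aemeasurable
    have hch := chernoff P hg α (-(β * k)) hα0.le
    have hset : {ω | -(β * (k:ℝ)) ≤ -(∑ i ∈ Finset.range k, X i ω)}
        = {ω | (∑ i ∈ Finset.range k, X i ω) ≤ β * k} := by
      ext ω; simp [neg_le_neg_iff]
    rw [hset] at hch
    have hprod : ∫⁻ ω, ENNReal.ofReal (exp (α * -(∑ i ∈ Finset.range k, X i ω))) ∂P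
        = (ENNReal.ofReal ρ) ^ k := by
      have hpt : ∀ ω, ENNReal.ofReal (exp (α * -(∑ i ∈ Finset.range k, X i ω)))
          = ∏ i ∈ Finset.range k, ENNReal.ofReal (exp (-(α * X i ω))) := by
        intro ω
        rw [← ENNReal.ofReal_prod_of_nonneg (fun i _ => (exp_pos _).le), ← Real.exp_sum]
        congr 1
        rw [mul_neg, Finset.mul_sum, ← Finset.sum_neg_distrib]
      rw [lintegral_congr hpt,
        iIndep_lintegral_prod P X hXi hXm (fun _ v => ENNReal.ofReal (exp (-(α * v))))
          (fun _ => (measurable_exp.comp ((measurable_id.const_mul α).neg)).ennreal_ofReal) k,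
        Finset.prod_congr rfl (fun i _ => by
          rw [hlintX (fun v => ENNReal.ofReal (exp (-(α * v))))
            ((measurable_exp.comp ((measurable_id.const_mul α).neg)).ennreal_ofReal) i, hρE]),
        Finset.prod_const, Finset.card_range]
    rw [hprod] at hch
    refine le_trans hch ?_
    rw [← ENNReal.ofReal_pow hρ0, ← ENNReal.ofReal_mul (exp_pos _).le]
    apply ENNReal.ofReal_le_ofReal
    have h1 : ρ ^ k ≤ exp (-(α * m / 2)) ^ k :=
      pow_le_pow_left₀ hρ0 (hρub.trans (by linarith [add_one_le_exp (-(α * m / 2))])) k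
    calc exp (-(α * -(β * k))) * ρ ^ k ≤ exp (-(α * -(β * k))) * exp (-(α * m / 2)) ^ k := by
          apply mul_le_mul_of_nonneg_left h1 (exp_pos _).le
    _ = rr ^ k := by
        rw [← Real.exp_nat_mul, ← Real.exp_add, hrrdef, ← Real.exp_nat_mul]
        congr 1
        rw [hβdef]; ring
  -- Q side
  set MqE := ∫⁻ ω, ENNReal.ofReal (exp (δ * max (Q 0 ω) 0)) ∂P with hMqEdef
  have hMqEeq : MqE = ∫⁻ ω, ENNReal.ofReal (exp (δ * Q 0 ω)) ∂P := by
    apply lintegral_congr_ae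
    filter_upwards [hQnonneg 0] with ω h
    rw [max_eq_left h]
  have hMqEfin : MqE ≠ ⊤ := by rw [hMqEeq]; exact hδfin.ne
  set Mq := MqE.toReal with hMqdef
  have hMqE' : MqE = ENNReal.ofReal Mq := (ENNReal.ofReal_toReal hMqEfin).symm
  have hMq1 : 1 ≤ Mq := by
    have h1 : (1 : ℝ≥0∞) ≤ MqE := by
      rw [hMqEdef]
      calc (1:ℝ≥0∞) = ∫⁻ _, (1:ℝ≥0∞) ∂P := by simp
      _ ≤ _ := lintegral_mono fun ω => by
          rw [← ENNReal.ofReal_one]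
          exact ENNReal.ofReal_le_ofReal (one_le_exp (by positivity))
    rw [hMqE'] at h1
    exact ENNReal.one_le_ofReal.mp h1
  have hMq0 : 0 < Mq := lt_of_lt_of_le one_pos hMq1
  have hfQ : Measurable fun v : ℝ => ENNReal.ofReal (exp (δ * max v 0)) :=
    (measurable_exp.comp ((measurable_id.max measurable_const).const_mul δ)).ennreal_ofReal
  have hlintQk : ∀ k, ∫⁻ ω, ENNReal.ofReal (exp (δ * max (Q k ω) 0)) ∂P = ENNReal.ofReal Mq :=
    fun k => by rw [hlintQ _ hfQ k, ← hMqEdef, hMqE']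
  clear_value MqE Mq
  set η := δ / (2 * (Real.log Mq + 1)) with hηdef
  have hlog0 : 0 ≤ Real.log Mq := Real.log_nonneg hMq1
  have hη0 : 0 < η := div_pos hδ (by linarith)
  have hηlog : η * Real.log Mq ≤ δ / 2 := by
    rw [hηdef, div_mul_eq_mul_div, div_le_div_iff₀ (by linarith) (by norm_num)]
    linarith [hδ.le, mul_le_mul_of_nonneg_left hlog0 hδ.le]
  set c0 := (1 - exp (-(β / 2))) / 2 with hc0def
  have hexpβ2 : exp (-(β / 2)) < 1 := exp_lt_one_iff.mpr (by linarith)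
  have hc00 : 0 < c0 := by rw [hc0def]; linarith
  set γ' := min (δ * c0) (min (α * m * η / 4) (δ / 2)) with hγ'def
  have hδc0 : 0 < δ * c0 := mul_pos hδ hc00
  have hαmη : 0 < α * m * η / 4 := by
    have := mul_pos (mul_pos hα0 hm0) hη0
    linarith
  have hγ'0 : 0 < γ' := lt_min hδc0 (lt_min hαmη (half_pos hδ))
  have hγ'le1 : γ' ≤ δ * c0 := by rw [hγ'def]; exact min_le_left _ _
  have hγ'le2 : γ' ≤ α * m * η / 4 := by
    rw [hγ'def]
    exact le_trans (min_le_right _ _) (min_le_left _ _)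
  have hγ'le3 : γ' ≤ δ / 2 := by
    rw [hγ'def]
    exact le_trans (min_le_right _ _) (min_le_right _ _)
  clear_value η γ'
  have hδc0β : 0 < δ * c0 * β / 2 := by
    have := mul_pos hδc0 hβ0
    linarith
  have hden1 : 0 < 1 - exp (-(δ * c0 * β / 2)) := by
    have := exp_lt_one_iff.mpr (by linarith : -(δ * c0 * β / 2) < 0)
    linarith
  set A1 := Mq / (1 - exp (-(δ * c0 * β / 2))) with hA1def
  set A2 := 1 / (1 - rr) with hA2def
  have hA10 : 0 ≤ A1 := div_nonneg hMq0.le hden1.le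
  have hA20 : 0 ≤ A2 := by
    rw [hA2def]
    exact div_nonneg zero_le_one (by linarith)
  set AA := A1 + A2 + Mq with hAAdef
  have hAA0 : 0 ≤ AA := by
    rw [hAAdef]
    have := hMq0.le
    linarith
  clear_value c0 A1 A2 AA
  set Y : ℝ → Ω → ℝ≥0∞ := fun x ω => ∑' k : ℕ,
      (if 0 ≤ x + ∑ i ∈ Finset.range k, X i ω then
        ENNReal.ofReal (exp (-(x + ∑ i ∈ Finset.range k, X i ω)) * Q k ω) else 0) with hYdef
  clear_value Y
  have htail2 : ∀ x : ℝ, 0 ≤ x → ∀ t : ℝ, 1 ≤ t →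
      P {ω | ENNReal.ofReal (2 * t) ≤ Y x ω} ≤ ENNReal.ofReal (AA * exp (-(γ' * t))) := by
    intro x hx t ht
    have ht0 : 0 < t := lt_of_lt_of_le one_pos ht
    have hsplit1 : ∀ ω, Y x ω ≤
        (∑' k : ℕ, ENNReal.ofReal (exp (-(β * k)) * Q k ω)) +
        (∑' k : ℕ, (if (∑ i ∈ Finset.range k, X i ω) ≤ β * k
          then ENNReal.ofReal (Q k ω) else 0)) := by
      intro ω
      rw [← ENNReal.tsum_add]
      simp only [hYdef]
      apply ENNReal.tsum_le_tsum
      intro k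
      by_cases hS : 0 ≤ x + ∑ i ∈ Finset.range k, X i ω
      · rw [if_pos hS]
        by_cases hw : (∑ i ∈ Finset.range k, X i ω) ≤ β * k
        · rw [if_pos hw]
          refine le_trans ?_ (self_le_add_left _ _)
          rcases le_or_gt (Q k ω) 0 with hq | hq
          · rw [ENNReal.ofReal_eq_zero.mpr (mul_nonpos_of_nonneg_of_nonpos (exp_pos _).le hq)]
            exact zero_le
          · exact ENNReal.ofReal_le_ofReal
              (mul_le_of_le_one_left hq.le (exp_le_one_iff.mpr (by linarith)))
        · rw [if_neg hw, add_zero]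
          rcases le_or_gt (Q k ω) 0 with hq | hq
          · rw [ENNReal.ofReal_eq_zero.mpr (mul_nonpos_of_nonneg_of_nonpos (exp_pos _).le hq)]
            exact zero_le
          · exact ENNReal.ofReal_le_ofReal
              (mul_le_mul_of_nonneg_right (exp_le_exp.mpr (by linarith)) hq.le)
      · rw [if_neg hS]; exact zero_le
    have hsub2 : {ω | ENNReal.ofReal (2 * t) ≤ Y x ω} ⊆
        {ω | ENNReal.ofReal t ≤ ∑' k : ℕ, ENNReal.ofReal (exp (-(β * k)) * Q k ω)} ∪
        {ω | ENNReal.ofReal t ≤ ∑' k : ℕ, (if (∑ i ∈ Finset.range k, X i ω) ≤ β * k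
          then ENNReal.ofReal (Q k ω) else 0)} := by
      intro ω hω
      simp only [Set.mem_setOf_eq] at hω
      by_contra hc
      simp only [Set.mem_union, Set.mem_setOf_eq, not_or, not_le] at hc
      have h3 := lt_of_le_of_lt (hsplit1 ω) (ENNReal.add_lt_add hc.1 hc.2)
      rw [← ENNReal.ofReal_add ht0.le ht0.le] at h3
      rw [show t + t = 2 * t by ring] at h3
      exact absurd (lt_of_le_of_lt hω h3) (lt_irrefl _)
    have hGbound : P {ω | ENNReal.ofReal t ≤ ∑' k : ℕ, ENNReal.ofReal (exp (-(β * k)) * Q k ω)}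
        ≤ ENNReal.ofReal (A1 * exp (-(δ * c0 * t))) := by
      have hsubG : {ω | ENNReal.ofReal t ≤ ∑' k : ℕ, ENNReal.ofReal (exp (-(β * k)) * Q k ω)} ⊆
          ⋃ k : ℕ, {ω | c0 * exp (β / 2 * k) * t ≤ max (Q k ω) 0} := by
        intro ω hω
        by_contra hc
        simp only [Set.mem_iUnion, Set.mem_setOf_eq, not_exists, not_le] at hc
        have hterm : ∀ k : ℕ, ENNReal.ofReal (exp (-(β * k)) * Q k ω)
            ≤ ENNReal.ofReal (c0 * t * exp (-(β / 2)) ^ k) := by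
          intro k
          apply ENNReal.ofReal_le_ofReal
          have h5 : exp (-(β * k)) * Q k ω ≤ exp (-(β * k)) * (c0 * exp (β / 2 * k) * t) :=
            mul_le_mul_of_nonneg_left ((le_max_left _ _).trans (hc k).le) (exp_pos _).le
          refine h5.trans (le_of_eq ?_)
          have hE : exp (-(β * (k:ℝ))) * exp (β / 2 * (k:ℝ)) = exp (-(β / 2)) ^ k := by
            rw [← Real.exp_add, ← Real.exp_nat_mul]; congr 1; ring
          calc exp (-(β * (k:ℝ))) * (c0 * exp (β / 2 * (k:ℝ)) * t)
              = c0 * t * (exp (-(β * (k:ℝ))) * exp (β / 2 * (k:ℝ))) := by ring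
          _ = c0 * t * exp (-(β / 2)) ^ k := by rw [hE]
        have hGle : (∑' k : ℕ, ENNReal.ofReal (exp (-(β * k)) * Q k ω))
            ≤ ENNReal.ofReal (c0 * t / (1 - exp (-(β / 2)))) := by
          refine le_trans (ENNReal.tsum_le_tsum hterm) (le_of_eq ?_)
          exact tsum_ofReal_geom (mul_nonneg hc00.le ht0.le) (exp_pos _).le hexpβ2
        have h12 := hω.trans hGle
        rw [ENNReal.ofReal_le_ofReal_iff
          (div_nonneg (mul_nonneg hc00.le ht0.le) (by linarith))] at h12
        have h2c0 : 1 - exp (-(β / 2)) = 2 * c0 := by rw [hc0def]; ring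
        rw [h2c0] at h12
        have h13 : t ≤ t / 2 := by
          calc t ≤ c0 * t / (2 * c0) := h12
          _ = t / 2 := by field_simp
        linarith
      refine le_trans (measure_mono hsubG) (le_trans (measure_iUnion_le _) ?_)
      have hterm2 : ∀ k : ℕ, P {ω | c0 * exp (β / 2 * k) * t ≤ max (Q k ω) 0}
          ≤ ENNReal.ofReal (Mq * exp (-(δ * c0 * t)) * exp (-(δ * c0 * β / 2)) ^ k) := by
        intro k
        have hch := chernoff P (g := fun ω => max (Q k ω) 0)
          ((hQm k).max measurable_const).aemeasurable δ (c0 * exp (β / 2 * k) * t) hδ.le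
        refine le_trans hch ?_
        rw [hlintQk k, ← ENNReal.ofReal_mul (exp_pos _).le]
        apply ENNReal.ofReal_le_ofReal
        have hek : (1 : ℝ) + β / 2 * k ≤ exp (β / 2 * k) := by
          linarith [add_one_le_exp (β / 2 * k)]
        have hbk : (0:ℝ) ≤ β / 2 * k := mul_nonneg (by linarith) (Nat.cast_nonneg k)
        have harg : δ * c0 * t + δ * c0 * β / 2 * k ≤ δ * (c0 * exp (β / 2 * k) * t) := by
          have h14 : t * (1 + β / 2 * k) ≤ t * exp (β / 2 * k) :=
            mul_le_mul_of_nonneg_left hek ht0.le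
          have h15 : t + β / 2 * k ≤ t * exp (β / 2 * k) := by
            linarith [h14, mul_le_mul_of_nonneg_right ht hbk]
          linarith [mul_le_mul_of_nonneg_left h15 hδc0.le]
        have h16 : exp (-(δ * (c0 * exp (β / 2 * k) * t)))
            ≤ exp (-(δ * c0 * t)) * exp (-(δ * c0 * β / 2)) ^ k := by
          rw [← Real.exp_nat_mul, ← Real.exp_add]
          apply exp_le_exp.mpr
          linarith [harg]
        calc exp (-(δ * (c0 * exp (β / 2 * k) * t))) * Mq
            ≤ (exp (-(δ * c0 * t)) * exp (-(δ * c0 * β / 2)) ^ k) * Mq :=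
              mul_le_mul_of_nonneg_right h16 hMq0.le
        _ = Mq * exp (-(δ * c0 * t)) * exp (-(δ * c0 * β / 2)) ^ k := by ring
      refine le_trans (ENNReal.tsum_le_tsum hterm2) (le_of_eq ?_)
      rw [tsum_ofReal_geom (mul_nonneg hMq0.le (exp_pos _).le) (exp_pos _).le
        (exp_lt_one_iff.mpr (by linarith))]
      congr 1
      rw [hA1def]; ring
    have hBbound : P {ω | ENNReal.ofReal t ≤
          ∑' k : ℕ, (if (∑ i ∈ Finset.range k, X i ω) ≤ β * k
            then ENNReal.ofReal (Q k ω) else 0)}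
        ≤ ENNReal.ofReal (A2 * exp (-(α * m * η / 4 * t)) + Mq * exp (-(δ / 2 * t))) := by
      set n0 := Nat.ceil (η * t) with hn0def
      have hn0ge : η * t ≤ (n0:ℝ) := Nat.le_ceil _
      have hn0le : (n0 : ℝ) ≤ η * t + 1 :=
        le_of_lt (Nat.ceil_lt_add_one (mul_nonneg hη0.le ht0.le))
      have hsubB : {ω | ENNReal.ofReal t ≤
            ∑' k : ℕ, (if (∑ i ∈ Finset.range k, X i ω) ≤ β * k
              then ENNReal.ofReal (Q k ω) else 0)} ⊆
          (⋃ j : ℕ, {ω | (∑ i ∈ Finset.range (n0 + j), X i ω) ≤ β * ((n0 + j : ℕ):ℝ)})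
          ∪ {ω | t ≤ ∑ k ∈ Finset.range n0, max (Q k ω) 0} := by
        intro ω hω
        simp only [Set.mem_setOf_eq] at hω
        by_contra hc
        simp only [Set.mem_union, Set.mem_iUnion, Set.mem_setOf_eq, not_or, not_exists,
          not_le] at hc
        obtain ⟨hc1, hc2⟩ := hc
        have hvan : ∀ k, k ∉ Finset.range n0 →
            (if (∑ i ∈ Finset.range k, X i ω) ≤ β * k then ENNReal.ofReal (Q k ω) else 0)
              = 0 := by
          intro k hk
          rw [Finset.mem_range, not_lt] at hk
          obtain ⟨j, rfl⟩ := Nat.exists_eq_add_of_le hk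
          exact if_neg (not_le.mpr (hc1 j))
        have hBle : (∑' k : ℕ, (if (∑ i ∈ Finset.range k, X i ω) ≤ β * k
            then ENNReal.ofReal (Q k ω) else 0))
            ≤ ENNReal.ofReal (∑ k ∈ Finset.range n0, max (Q k ω) 0) := by
          rw [tsum_eq_sum hvan,
            ENNReal.ofReal_sum_of_nonneg (fun i _ => le_max_right _ _)]
          apply Finset.sum_le_sum
          intro k _
          split_ifs with h
          · exact ENNReal.ofReal_le_ofReal (le_max_left _ _)
          · exact zero_le
        have h17 := hω.trans hBle
        rw [ENNReal.ofReal_le_ofReal_iff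
          (Finset.sum_nonneg fun i _ => le_max_right _ _)] at h17
        exact absurd h17 (not_le.mpr hc2)
      have hP1 : P (⋃ j : ℕ, {ω | (∑ i ∈ Finset.range (n0 + j), X i ω)
            ≤ β * ((n0 + j : ℕ):ℝ)})
          ≤ ENNReal.ofReal (A2 * exp (-(α * m * η / 4 * t))) := by
        refine le_trans (measure_iUnion_le _) ?_
        have h1 : ∀ j : ℕ, P {ω | (∑ i ∈ Finset.range (n0 + j), X i ω)
            ≤ β * ((n0 + j : ℕ):ℝ)} ≤ ENNReal.ofReal (rr ^ n0 * rr ^ j) := by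
          intro j; rw [← pow_add]; exact hW (n0 + j)
        refine le_trans (ENNReal.tsum_le_tsum h1) ?_
        rw [tsum_ofReal_geom (pow_nonneg hrr0 _) hrr0 hrr1]
        apply ENNReal.ofReal_le_ofReal
        have h2 : rr ^ n0 ≤ exp (-(α * m / 4) * (η * t)) := by
          rw [hrrdef, ← Real.exp_nat_mul]
          apply exp_le_exp.mpr
          linarith [mul_le_mul_of_nonneg_left hn0ge
            (by linarith [mul_pos hα0 hm0] : (0:ℝ) ≤ α * m / 4)]
        calc rr ^ n0 / (1 - rr) ≤ exp (-(α * m / 4) * (η * t)) / (1 - rr) := by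
              gcongr
        _ = A2 * exp (-(α * m * η / 4 * t)) := by
            rw [hA2def, show -(α * m / 4) * (η * t) = -(α * m * η / 4 * t) by ring]
            ring
      have hP2 : P {ω | t ≤ ∑ k ∈ Finset.range n0, max (Q k ω) 0}
          ≤ ENNReal.ofReal (Mq * exp (-(δ / 2 * t))) := by
        have hgm : AEMeasurable (fun ω => ∑ k ∈ Finset.range n0, max (Q k ω) 0) P :=
          (Finset.measurable_sum _ fun k _ => (hQm k).max measurable_const).aemeasurable
        refine le_trans (chernoff P hgm δ t hδ.le) ?_
        have hprod : ∫⁻ ω, ENNReal.ofReal (exp (δ * ∑ k ∈ Finset.range n0, max (Q k ω) 0)) ∂P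
            = ENNReal.ofReal (Mq ^ n0) := by
          have hpt : ∀ ω, ENNReal.ofReal (exp (δ * ∑ k ∈ Finset.range n0, max (Q k ω) 0))
              = ∏ k ∈ Finset.range n0, ENNReal.ofReal (exp (δ * max (Q k ω) 0)) := by
            intro ω
            rw [← ENNReal.ofReal_prod_of_nonneg (fun i _ => (exp_pos _).le), ← Real.exp_sum,
              Finset.mul_sum]
          rw [lintegral_congr hpt,
            iIndep_lintegral_prod P Q hQi hQm _ (fun _ => hfQ) n0,
            Finset.prod_congr rfl (fun k _ => hlintQk k), Finset.prod_const,
            Finset.card_range, ← ENNReal.ofReal_pow hMq0.le]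
        rw [hprod, ← ENNReal.ofReal_mul (exp_pos _).le]
        apply ENNReal.ofReal_le_ofReal
        have hMqn : Mq ^ n0 = exp ((n0:ℝ) * Real.log Mq) := by
          rw [Real.exp_nat_mul, Real.exp_log hMq0]
        have h18 : (n0:ℝ) * Real.log Mq ≤ (η * t + 1) * Real.log Mq :=
          mul_le_mul_of_nonneg_right hn0le hlog0
        have h19 : η * Real.log Mq * t ≤ δ / 2 * t :=
          mul_le_mul_of_nonneg_right hηlog ht0.le
        calc exp (-(δ * t)) * Mq ^ n0 = exp (-(δ * t) + (n0:ℝ) * Real.log Mq) := by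
              rw [hMqn, ← Real.exp_add]
        _ ≤ exp (Real.log Mq + -(δ / 2 * t)) := by
              apply exp_le_exp.mpr
              have h18' : (η * t + 1) * Real.log Mq
                  = η * Real.log Mq * t + Real.log Mq := by ring
              linarith [h18, h19]
        _ = Mq * exp (-(δ / 2 * t)) := by rw [Real.exp_add, Real.exp_log hMq0]
      refine le_trans (measure_mono hsubB) (le_trans (measure_union_le _ _) ?_)
      rw [ENNReal.ofReal_add (mul_nonneg hA20 (exp_pos _).le)
        (mul_nonneg hMq0.le (exp_pos _).le)]
      exact add_le_add hP1 hP2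
    refine le_trans (measure_mono hsub2) (le_trans (measure_union_le _ _)
      (le_trans (add_le_add hGbound hBbound) ?_))
    rw [← ENNReal.ofReal_add (mul_nonneg hA10 (exp_pos _).le)
      (add_nonneg (mul_nonneg hA20 (exp_pos _).le) (mul_nonneg hMq0.le (exp_pos _).le))]
    apply ENNReal.ofReal_le_ofReal
    have e1 : exp (-(δ * c0 * t)) ≤ exp (-(γ' * t)) := by
      apply exp_le_exp.mpr
      linarith [mul_le_mul_of_nonneg_right hγ'le1 ht0.le]
    have e2 : exp (-(α * m * η / 4 * t)) ≤ exp (-(γ' * t)) := by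
      apply exp_le_exp.mpr
      linarith [mul_le_mul_of_nonneg_right hγ'le2 ht0.le]
    have e3 : exp (-(δ / 2 * t)) ≤ exp (-(γ' * t)) := by
      apply exp_le_exp.mpr
      linarith [mul_le_mul_of_nonneg_right hγ'le3 ht0.le]
    calc A1 * exp (-(δ * c0 * t)) + (A2 * exp (-(α * m * η / 4 * t)) + Mq * exp (-(δ / 2 * t)))
        ≤ A1 * exp (-(γ' * t)) + (A2 * exp (-(γ' * t)) + Mq * exp (-(γ' * t))) := by
          gcongr
    _ = AA * exp (-(γ' * t)) := by rw [hAAdef]; ring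
  set γ := γ' / 2 with hγdef
  have hγ0 : 0 < γ := half_pos hγ'0
  set AB := max AA 1 * exp γ' with hABdef
  have hABmax1 : (1:ℝ) ≤ max AA 1 := le_max_right _ _
  have hAB1 : 1 ≤ AB := by
    rw [hABdef]
    calc (1:ℝ) = 1 * 1 := by norm_num
    _ ≤ max AA 1 * exp γ' :=
        mul_le_mul hABmax1 (one_le_exp hγ'0.le) zero_le_one (by linarith)
  clear_value γ AB
  have htailN : ∀ x : ℝ, 0 ≤ x → ∀ n : ℕ,
      P {ω | (n : ℝ≥0∞) ≤ Y x ω} ≤ ENNReal.ofReal (AB * exp (-(γ * n))) := by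
    intro x hx n
    rcases le_or_gt 2 n with hn | hn
    · have hn2 : (2:ℝ) ≤ (n:ℝ) := by exact_mod_cast hn
      have ht : (1:ℝ) ≤ (n:ℝ) / 2 := by linarith
      have h0 := htail2 x hx ((n:ℝ) / 2) ht
      rw [show 2 * ((n:ℝ) / 2) = (n:ℝ) by ring, ENNReal.ofReal_natCast] at h0
      refine le_trans h0 (ENNReal.ofReal_le_ofReal ?_)
      rw [show -(γ * (n:ℝ)) = -(γ' * ((n:ℝ) / 2)) by rw [hγdef]; ring]
      apply mul_le_mul_of_nonneg_right _ (exp_pos _).le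
      calc AA ≤ max AA 1 := le_max_left _ _
      _ ≤ AB := by
          rw [hABdef]
          have := mul_le_mul_of_nonneg_left (one_le_exp hγ'0.le)
            (le_trans zero_le_one hABmax1)
          linarith
    · refine le_trans prob_le_one ?_
      apply ENNReal.one_le_ofReal.mpr
      have hn1 : (n:ℝ) ≤ 1 := by
        have : n ≤ 1 := Nat.lt_succ_iff.mp hn
        exact_mod_cast this
      calc (1:ℝ) = exp 0 := exp_zero.symm
      _ ≤ exp (γ' + -(γ * n)) := by
          apply exp_le_exp.mpr
          rw [hγdef]
          linarith [mul_le_mul_of_nonneg_left hn1 hγ'0.le]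
      _ = exp γ' * exp (-(γ * n)) := Real.exp_add _ _
      _ ≤ AB * exp (-(γ * n)) := by
          apply mul_le_mul_of_nonneg_right _ (exp_pos _).le
          rw [hABdef]
          linarith [mul_le_mul_of_nonneg_right hABmax1 (exp_pos γ').le]
  set q := exp (-(γ / 2)) with hqdef
  have hq0 : (0:ℝ) ≤ q := (exp_pos _).le
  have hq1 : q < 1 := exp_lt_one_iff.mpr (by linarith)
  have hq1' : (0:ℝ) < 1 - q := by linarith
  clear_value q
  have hABe : (0:ℝ) < AB * exp γ := mul_pos (by linarith) (exp_pos γ)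
  obtain ⟨T, hT1, hTbound⟩ : ∃ T : ℕ, 1 ≤ T ∧ AB * exp γ * q ^ T / (1 - q) ≤ 1 / 2 := by
    have hlim := tendsto_pow_atTop_nhds_zero_of_lt_one hq0 hq1
    have hev : ∀ᶠ T : ℕ in atTop, q ^ T < 1 / 2 * (1 - q) / (AB * exp γ) :=
      hlim.eventually (Iio_mem_nhds (div_pos (mul_pos (by norm_num) hq1') hABe))
    obtain ⟨T, hT⟩ := ((eventually_ge_atTop 1).and hev).exists
    refine ⟨T, hT.1, ?_⟩
    rw [div_le_iff₀ hq1']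
    calc AB * exp γ * q ^ T ≤ AB * exp γ * (1 / 2 * (1 - q) / (AB * exp γ)) := by
          apply mul_le_mul_of_nonneg_left hT.2.le hABe.le
    _ = 1 / 2 * (1 - q) := by field_simp
  have hT0 : (0:ℝ) < (T:ℝ) := by exact_mod_cast hT1
  set ε := min (γ / 2) (Real.log (3 / 2) / T) with hεdef
  have hlog32 : 0 < Real.log (3 / 2) := Real.log_pos (by norm_num)
  have hε0 : 0 < ε := lt_min (by linarith) (div_pos hlog32 hT0)
  have hεγ : ε ≤ γ / 2 := min_le_left _ _
  have hεlog : ε ≤ Real.log (3 / 2) / T := min_le_right _ _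
  clear_value ε
  refine ⟨ε, hε0, ?_⟩
  intro x hx
  have hYm : Measurable (Y x) := by
    simp only [hYdef]
    apply Measurable.ennreal_tsum
    intro k
    have hsm : MeasurableSet {ω | 0 ≤ x + ∑ i ∈ Finset.range k, X i ω} :=
      measurableSet_le measurable_const
        (measurable_const.add (Finset.measurable_sum _ fun i _ => hXm i))
    exact Measurable.ite hsm
      (((measurable_exp.comp
        (measurable_const.add (Finset.measurable_sum _ fun i _ => hXm i)).neg).mul
        (hQm k)).ennreal_ofReal) measurable_const
  have hnull : P {ω | Y x ω = ⊤} = 0 := by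
    have hsubn : ∀ n : ℕ, {ω | Y x ω = ⊤} ⊆ {ω | (n : ℝ≥0∞) ≤ Y x ω} := by
      intro n ω h
      simp only [Set.mem_setOf_eq] at h ⊢
      rw [h]; exact le_top
    have hb : ∀ n : ℕ, P {ω | Y x ω = ⊤} ≤ ENNReal.ofReal (AB * exp (-(γ * n))) :=
      fun n => le_trans (measure_mono (hsubn n)) (htailN x hx n)
    have hlim : Tendsto (fun n : ℕ => ENNReal.ofReal (AB * exp (-(γ * n)))) atTop (nhds 0) := by
      have h2 : ∀ n : ℕ, AB * exp (-(γ * n)) = AB * exp (-γ) ^ n := by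
        intro n; rw [← Real.exp_nat_mul]; congr 2; ring
      simp only [h2]
      have h3 : Tendsto (fun n : ℕ => AB * exp (-γ) ^ n) atTop (nhds (AB * 0)) :=
        (tendsto_pow_atTop_nhds_zero_of_lt_one (exp_pos _).le
          (exp_lt_one_iff.mpr (by linarith))).const_mul AB
      rw [mul_zero] at h3
      have h4 := ENNReal.tendsto_ofReal h3
      rwa [ENNReal.ofReal_zero] at h4
    exact le_antisymm (ge_of_tendsto hlim (Filter.Eventually.of_forall hb)) (zero_le)
  have haefin : ∀ᵐ ω ∂P, Y x ω ≠ ⊤ := by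
    rw [ae_iff]
    have hset : {ω | ¬ Y x ω ≠ ⊤} = {ω | Y x ω = ⊤} := by ext ω; simp
    rw [hset]; exact hnull
  have hptF : ∀ ω, Y x ω ≠ ⊤ → expE (ENNReal.ofReal ε * Y x ω) ≤
      ENNReal.ofReal (exp (ε * T)) +
      ∑' j : ℕ, Set.indicator {ω' | ((T + j : ℕ) : ℝ≥0∞) ≤ Y x ω'}
        (fun _ => ENNReal.ofReal (exp (ε * ((T:ℝ) + j + 1)))) ω := by
    intro ω hfin
    have hy0 : (0:ℝ) ≤ (Y x ω).toReal := ENNReal.toReal_nonneg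
    have hYeq : Y x ω = ENNReal.ofReal ((Y x ω).toReal) := (ENNReal.ofReal_toReal hfin).symm
    have hmul : ENNReal.ofReal ε * Y x ω = ENNReal.ofReal (ε * (Y x ω).toReal) := by
      conv_lhs => rw [hYeq]
      rw [← ENNReal.ofReal_mul hε0.le]
    have hexpE : expE (ENNReal.ofReal ε * Y x ω)
        = ENNReal.ofReal (exp (ε * (Y x ω).toReal)) := by
      rw [hmul, expE, if_neg ENNReal.ofReal_ne_top,
        ENNReal.toReal_ofReal (mul_nonneg hε0.le hy0)]
    rw [hexpE]
    rcases lt_or_ge (Y x ω).toReal (T:ℝ) with hyT | hyT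
    · exact le_trans (ENNReal.ofReal_le_ofReal (exp_le_exp.mpr
        (mul_le_mul_of_nonneg_left hyT.le hε0.le))) le_self_add
    · have hfl : T ≤ Nat.floor ((Y x ω).toReal) := Nat.le_floor hyT
      have hTj : T + (Nat.floor ((Y x ω).toReal) - T) = Nat.floor ((Y x ω).toReal) := by omega
      set j := Nat.floor ((Y x ω).toReal) - T with hjdef
      have hmem : ω ∈ {ω' | ((T + j : ℕ) : ℝ≥0∞) ≤ Y x ω'} := by
        simp only [Set.mem_setOf_eq, hTj]
        calc ((Nat.floor ((Y x ω).toReal) : ℕ) : ℝ≥0∞)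
            = ENNReal.ofReal ((Nat.floor ((Y x ω).toReal) : ℕ) : ℝ) :=
              (ENNReal.ofReal_natCast _).symm
        _ ≤ ENNReal.ofReal ((Y x ω).toReal) :=
              ENNReal.ofReal_le_ofReal (Nat.floor_le hy0)
        _ = Y x ω := hYeq.symm
      have hval : exp (ε * (Y x ω).toReal) ≤ exp (ε * ((T:ℝ) + j + 1)) := by
        apply exp_le_exp.mpr
        apply mul_le_mul_of_nonneg_left _ hε0.le
        have h22 := Nat.lt_floor_add_one ((Y x ω).toReal)
        have h23 : ((T + j : ℕ):ℝ) = (Nat.floor ((Y x ω).toReal) : ℝ) := by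
          exact_mod_cast congrArg (Nat.cast (R := ℝ)) hTj
        push_cast at h23
        linarith
      calc ENNReal.ofReal (exp (ε * (Y x ω).toReal))
          ≤ ENNReal.ofReal (exp (ε * ((T:ℝ) + j + 1))) := ENNReal.ofReal_le_ofReal hval
      _ = Set.indicator {ω' | ((T + j : ℕ) : ℝ≥0∞) ≤ Y x ω'}
          (fun _ => ENNReal.ofReal (exp (ε * ((T:ℝ) + j + 1)))) ω :=
            (Set.indicator_of_mem hmem
              (fun _ => ENNReal.ofReal (exp (ε * ((T:ℝ) + j + 1))))).symm
      _ ≤ ∑' j' : ℕ, Set.indicator {ω' | ((T + j' : ℕ) : ℝ≥0∞) ≤ Y x ω'}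
          (fun _ => ENNReal.ofReal (exp (ε * ((T:ℝ) + j' + 1)))) ω := ENNReal.le_tsum j
      _ ≤ _ := le_add_self
  have hEvmeas : ∀ j : ℕ, MeasurableSet {ω' | ((T + j : ℕ) : ℝ≥0∞) ≤ Y x ω'} := fun j =>
    measurableSet_le measurable_const hYm
  have main : ∫⁻ ω, expE (ENNReal.ofReal ε * Y x ω) ∂P ≤ 2 := by
    calc ∫⁻ ω, expE (ENNReal.ofReal ε * Y x ω) ∂P
        ≤ ∫⁻ ω, (ENNReal.ofReal (exp (ε * T)) +
          ∑' j : ℕ, Set.indicator {ω' | ((T + j : ℕ) : ℝ≥0∞) ≤ Y x ω'}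
            (fun _ => ENNReal.ofReal (exp (ε * ((T:ℝ) + j + 1)))) ω) ∂P :=
          lintegral_mono_ae (haefin.mono fun ω h => hptF ω h)
    _ = ENNReal.ofReal (exp (ε * T)) +
        ∑' j : ℕ, ENNReal.ofReal (exp (ε * ((T:ℝ) + j + 1)))
          * P {ω' | ((T + j : ℕ) : ℝ≥0∞) ≤ Y x ω'} := by
        rw [lintegral_add_left measurable_const, lintegral_const, measure_univ, mul_one]
        congr 1
        rw [lintegral_tsum (fun j => (measurable_const.indicator (hEvmeas j)).aemeasurable)]
        exact tsum_congr fun j => lintegral_indicator_const (hEvmeas j) _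
    _ ≤ ENNReal.ofReal (exp (ε * T)) + ENNReal.ofReal (1 / 2) := by
        apply add_le_add le_rfl
        have hterm : ∀ j : ℕ, ENNReal.ofReal (exp (ε * ((T:ℝ) + j + 1)))
            * P {ω' | ((T + j : ℕ) : ℝ≥0∞) ≤ Y x ω'}
            ≤ ENNReal.ofReal (AB * exp γ * q ^ T * q ^ j) := by
          intro j
          refine le_trans (mul_le_mul_right (htailN x hx (T + j)) _) ?_
          rw [← ENNReal.ofReal_mul (exp_pos _).le]
          apply ENNReal.ofReal_le_ofReal
          have hqTj : q ^ T * q ^ j = exp (((T:ℝ) + j) * -(γ / 2)) := by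
            rw [← pow_add, hqdef, ← Real.exp_nat_mul]
            congr 1
            push_cast; ring
          have hTjcast : ((T + j : ℕ):ℝ) = (T:ℝ) + (j:ℝ) := by push_cast; ring
          calc exp (ε * ((T:ℝ) + j + 1)) * (AB * exp (-(γ * ((T + j : ℕ):ℝ))))
              = AB * (exp (ε * ((T:ℝ) + j + 1)) * exp (-(γ * ((T:ℝ) + (j:ℝ))))) := by
                rw [hTjcast]; ring
          _ = AB * exp (ε * ((T:ℝ) + j + 1) + -(γ * ((T:ℝ) + j))) := by rw [Real.exp_add]
          _ ≤ AB * exp (γ + ((T:ℝ) + j) * -(γ / 2)) := by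
              apply mul_le_mul_of_nonneg_left _ (by linarith)
              apply exp_le_exp.mpr
              have hTj0 : (0:ℝ) ≤ (T:ℝ) + j := by positivity
              linarith [mul_le_mul_of_nonneg_right hεγ hTj0, hγ0.le, hεγ]
          _ = AB * exp γ * q ^ T * q ^ j := by
              rw [Real.exp_add, ← hqTj]; ring
        refine le_trans (ENNReal.tsum_le_tsum hterm) ?_
        rw [tsum_ofReal_geom (mul_nonneg hABe.le (pow_nonneg hq0 _)) hq0 hq1]
        apply ENNReal.ofReal_le_ofReal
        exact hTbound
    _ ≤ 2 := by
        have h32 : exp (ε * T) ≤ 3 / 2 := by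
          rw [← Real.exp_log (by norm_num : (0:ℝ) < 3 / 2)]
          apply exp_le_exp.mpr
          have hεle := hεlog
          calc ε * T ≤ Real.log (3 / 2) / T * T :=
                mul_le_mul_of_nonneg_right hεle (Nat.cast_nonneg T)
          _ = Real.log (3 / 2) := by field_simp
        calc ENNReal.ofReal (exp (ε * T)) + ENNReal.ofReal (1 / 2)
            ≤ ENNReal.ofReal (3 / 2) + ENNReal.ofReal (1 / 2) :=
              add_le_add (ENNReal.ofReal_le_ofReal h32) le_rfl
        _ = ENNReal.ofReal 2 := by
            rw [← ENNReal.ofReal_add (by norm_num) (by norm_num)]; norm_num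
        _ = 2 := by
            rw [show (2:ℝ) = ((2:ℕ):ℝ) by norm_num, ENNReal.ofReal_natCast]
            norm_num
  simpa only [hYdef] using main
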